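/- Under the hypotheses of Roberts' time-reversing symmetry lemma — γ a T-periodic solution of z' = J∇Γ(z) with Γ C², S orthogonal, Γ∘S = Γ, SJ = −JS, γ(−s + T/N) = Sγ(s) for all s, and X the fundamental matrix solution of ξ' = JD²Γ(γ(s))ξ with X(0) = I — one has X(T/N) = S B⁻¹ Sᵀ B, where B = X(T/2N) (assumed invertible). -/

import Mathlib

open Matrix

noncomputable section

/-- The gradient of `f : (ι → ℝ) → ℝ` as the vector of partial derivatives. -/
def grad {ι : Type*} [Fintype ι] [DecidableEq ι] (f : (ι → ℝ) → ℝ) (z : ι → ℝ) : ι → ℝ :=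
  fun i => fderiv ℝ f z (Pi.single i 1)

/-- The Hessian `D²f` of `f : (ι → ℝ) → ℝ` as a matrix of second partial derivatives. -/
def hessM {ι : Type*} [Fintype ι] [DecidableEq ι] (f : (ι → ℝ) → ℝ) (z : ι → ℝ) :
    Matrix ι ι ℝ :=
  Matrix.of fun i j => fderiv ℝ (fun w => fderiv ℝ f w (Pi.single j 1)) z (Pi.single i 1)

/-- The standard `2n × 2n` symplectic matrix `[[0, I], [-I, 0]]`. -/
def Jmat (n : ℕ) : Matrix (Fin n ⊕ Fin n) (Fin n ⊕ Fin n) ℝ :=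
  Matrix.fromBlocks 0 1 (-1) 0

section aux
variable {ι : Type*} [Fintype ι] [DecidableEq ι]

lemma hessM_eq_fderiv2 {Ω : Set (ι → ℝ)} (hΩ : IsOpen Ω) {Γ : (ι → ℝ) → ℝ}
    (hΓ1 : ContDiffOn ℝ 1 (fderiv ℝ Γ) Ω) {z : ι → ℝ} (hz : z ∈ Ω) (i j : ι) :
    hessM Γ z i j = fderiv ℝ (fderiv ℝ Γ) z (Pi.single i 1) (Pi.single j 1) := by
  have hdiff : DifferentiableAt ℝ (fderiv ℝ Γ) z :=
    (hΓ1.differentiableOn (by norm_num)).differentiableAt (hΩ.mem_nhds hz)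
  have h := fderiv_clm_apply (𝕜 := ℝ) hdiff
    (differentiableAt_const (Pi.single j 1 : ι → ℝ))
  simp only [fderiv_fun_const, Pi.zero_apply, ContinuousLinearMap.comp_zero, zero_add] at h
  show fderiv ℝ (fun w => fderiv ℝ Γ w (Pi.single j 1)) z (Pi.single i 1) = _
  rw [h]
  rfl

end aux

section aux2
variable {ι : Type*} [Fintype ι] [DecidableEq ι]

lemma hessM_conj {Ω : Set (ι → ℝ)} (hΩ : IsOpen Ω) {Γ : (ι → ℝ) → ℝ}
    (hΓ : ContDiffOn ℝ 2 Γ Ω) (S : Matrix ι ι ℝ)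
    (hSΩ : ∀ z ∈ Ω, S.mulVec z ∈ Ω)
    (hSinv : ∀ z ∈ Ω, Γ (S.mulVec z) = Γ z)
    {z : ι → ℝ} (hz : z ∈ Ω) :
    hessM Γ z = Sᵀ * hessM Γ (S.mulVec z) * S := by
  have hΓ1 : ContDiffOn ℝ 1 (fderiv ℝ Γ) Ω := hΓ.fderiv_of_isOpen hΩ (by norm_num)
  set L : (ι → ℝ) →L[ℝ] (ι → ℝ) := LinearMap.toContinuousLinearMap S.mulVecLin with hLdef
  have hL : ∀ w, L w = S.mulVec w := fun w => rfl
  have hdΓ : ∀ w ∈ Ω, DifferentiableAt ℝ Γ w := fun w hw =>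
    ((hΓ.differentiableOn (by norm_num)).differentiableAt (hΩ.mem_nhds hw))
  have hdφ : ∀ w ∈ Ω, DifferentiableAt ℝ (fderiv ℝ Γ) w := fun w hw =>
    ((hΓ1.differentiableOn (by norm_num)).differentiableAt (hΩ.mem_nhds hw))
  have step1 : ∀ w ∈ Ω, fderiv ℝ Γ w = (fderiv ℝ Γ (L w)).comp L := by
    intro w hw
    have hev : Γ =ᶠ[nhds w] fun x => Γ (L x) := by
      filter_upwards [hΩ.mem_nhds hw] with x hx
      rw [hL]; exact (hSinv x hx).symm
    calc fderiv ℝ Γ w = fderiv ℝ (fun x => Γ (L x)) w := hev.fderiv_eq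
      _ = (fderiv ℝ Γ (L w)).comp (fderiv ℝ L w) :=
          fderiv_comp w (by rw [hL]; exact hdΓ _ (hSΩ w hw)) L.differentiableAt
      _ = (fderiv ℝ Γ (L w)).comp L := by rw [L.fderiv]
  set R : ((ι → ℝ) →L[ℝ] ℝ) →L[ℝ] ((ι → ℝ) →L[ℝ] ℝ) :=
    (ContinuousLinearMap.compL ℝ (ι → ℝ) (ι → ℝ) ℝ).flip L with hRdef
  have hR : ∀ ψ : (ι → ℝ) →L[ℝ] ℝ, R ψ = ψ.comp L := fun ψ => rfl
  have hLz : L z ∈ Ω := by rw [hL]; exact hSΩ z hz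
  have step2 : fderiv ℝ (fderiv ℝ Γ) z =
      R.comp ((fderiv ℝ (fderiv ℝ Γ) (L z)).comp L) := by
    have hev2 : (fderiv ℝ Γ) =ᶠ[nhds z] fun w => R (fderiv ℝ Γ (L w)) := by
      filter_upwards [hΩ.mem_nhds hz] with x hx
      rw [hR]; exact step1 x hx
    have hdh : DifferentiableAt ℝ (fun w => fderiv ℝ Γ (L w)) z := by
      have := (hdφ _ hLz).comp z L.differentiableAt
      exact this
    calc fderiv ℝ (fderiv ℝ Γ) z = fderiv ℝ (fun w => R (fderiv ℝ Γ (L w))) z :=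
          hev2.fderiv_eq
      _ = (fderiv ℝ R (fderiv ℝ Γ (L z))).comp (fderiv ℝ (fun w => fderiv ℝ Γ (L w)) z) :=
          fderiv_comp z R.differentiableAt hdh
      _ = R.comp (fderiv ℝ (fun w => fderiv ℝ Γ (L w)) z) := by rw [R.fderiv]
      _ = R.comp ((fderiv ℝ (fderiv ℝ Γ) (L z)).comp (fderiv ℝ L z)) := by
          rw [show (fun w => fderiv ℝ Γ (L w)) = (fderiv ℝ Γ) ∘ L from rfl,
            fderiv_comp z (hdφ _ hLz) L.differentiableAt]
      _ = R.comp ((fderiv ℝ (fderiv ℝ Γ) (L z)).comp L) := by rw [L.fderiv]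
  have hLe : ∀ i : ι, L (Pi.single i 1) = ∑ k, S k i • (Pi.single k 1 : ι → ℝ) := by
    intro i
    funext m
    rw [hL]
    simp [Matrix.mulVec, dotProduct, Pi.single_apply, mul_ite, Finset.sum_apply,
      Finset.sum_ite_eq, Finset.sum_ite_eq']
  ext i j
  rw [hessM_eq_fderiv2 hΩ hΓ1 hz, step2]
  have hHLz : ∀ k l : ι, hessM Γ (S.mulVec z) k l
      = fderiv ℝ (fderiv ℝ Γ) (L z) (Pi.single k 1) (Pi.single l 1) := by
    intro k l
    have := hessM_eq_fderiv2 hΩ hΓ1 hLz k l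
    rwa [hL] at this
  show (fderiv ℝ (fderiv ℝ Γ) (L z)) (L (Pi.single i 1)) (L (Pi.single j 1)) = _
  rw [hLe i, hLe j]
  simp only [map_sum, _root_.map_smul, ContinuousLinearMap.sum_apply, ContinuousLinearMap.smul_apply,
    smul_eq_mul]
  simp only [← hHLz]
  simp only [Matrix.mul_apply, Matrix.transpose_apply, Finset.sum_mul, Finset.mul_sum]
  exact Finset.sum_congr rfl fun k _ => Finset.sum_congr rfl fun l _ => by ring
end aux2

section aux3
variable {ι : Type*} [Fintype ι] [DecidableEq ι]

lemma hessM_entry_continuousOn {Ω : Set (ι → ℝ)} (hΩ : IsOpen Ω) {Γ : (ι → ℝ) → ℝ}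
    (hΓ : ContDiffOn ℝ 2 Γ Ω) (i j : ι) :
    ContinuousOn (fun z => hessM Γ z i j) Ω := by
  have hΓ1 : ContDiffOn ℝ 1 (fderiv ℝ Γ) Ω := hΓ.fderiv_of_isOpen hΩ (by norm_num)
  have hΦ : ContinuousOn (fderiv ℝ (fderiv ℝ Γ)) Ω :=
    hΓ1.continuousOn_fderiv_of_isOpen hΩ le_rfl
  have h1 : Continuous fun ψ : (ι → ℝ) →L[ℝ] ((ι → ℝ) →L[ℝ] ℝ) =>
      ψ (Pi.single i 1) (Pi.single j 1) :=
    (ContinuousLinearMap.apply ℝ ℝ ((Pi.single j 1 : ι → ℝ))).continuous.comp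
      (ContinuousLinearMap.apply ℝ ((ι → ℝ) →L[ℝ] ℝ) ((Pi.single i 1 : ι → ℝ))).continuous
  exact ContinuousOn.congr (h1.comp_continuousOn hΦ)
    (fun z hz => hessM_eq_fderiv2 hΩ hΓ1 hz i j)

end aux3


/-- Roberts' time-reversing symmetry lemma: if `γ` is a `T`-periodic solution of
`z' = J∇Γ(z)` with time-reversing symmetry `S` (orthogonal, `Γ∘S = Γ`,
`SJ = −JS`, `γ(−s + T/N) = Sγ(s)`), and `X` is the fundamental matrix solution
of the linearization `ξ' = JD²Γ(γ(s))ξ`, `X(0) = I`, then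
`X(T/N) = S B⁻¹ Sᵀ B` where `B = X(T/2N)` (assumed invertible). -/
theorem roberts_factorization (n : ℕ)
    (Ω : Set ((Fin n ⊕ Fin n) → ℝ)) (hΩ : IsOpen Ω)
    (Γ : ((Fin n ⊕ Fin n) → ℝ) → ℝ) (hΓ : ContDiffOn ℝ 2 Γ Ω)
    (T : ℝ) (hT : 0 < T)
    (γ : ℝ → (Fin n ⊕ Fin n) → ℝ) (hmem : ∀ s, γ s ∈ Ω)
    (hsol : ∀ s : ℝ, HasDerivAt γ ((Jmat n).mulVec (grad Γ (γ s))) s)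
    (hper : Function.Periodic γ T)
    (S : Matrix (Fin n ⊕ Fin n) (Fin n ⊕ Fin n) ℝ)
    (hSorth : Sᵀ * S = 1)
    (N : ℕ) (hN : 0 < N)
    (hsymm : ∀ s : ℝ, γ (-s + T / (N : ℝ)) = S.mulVec (γ s))
    (hSΩ : S.mulVec '' Ω = Ω)
    (hSinv : ∀ z ∈ Ω, Γ (S.mulVec z) = Γ z)
    (hSJ : S * Jmat n = -(Jmat n * S))
    (X : ℝ → Matrix (Fin n ⊕ Fin n) (Fin n ⊕ Fin n) ℝ)
    (hX0 : X 0 = 1)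
    (hX : ∀ (s : ℝ) (i j : Fin n ⊕ Fin n),
      HasDerivAt (fun t => X t i j) ((Jmat n * hessM Γ (γ s) * X s) i j) s) :
    IsUnit (X (T / (2 * (N : ℝ)))) →
      X (T / (N : ℝ)) = S * (X (T / (2 * (N : ℝ))))⁻¹ * Sᵀ * X (T / (2 * (N : ℝ))) := by
  intro hB
  set c : ℝ := T / (2 * (N : ℝ)) with hcdef
  have hN' : (N : ℝ) ≠ 0 := Nat.cast_ne_zero.mpr hN.ne'
  have hc0 : 0 < c := div_pos hT (by positivity)
  have h2c : T / (N : ℝ) = c + c := by rw [hcdef]; field_simp; ring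
  have hmemS : ∀ z ∈ Ω, S.mulVec z ∈ Ω := fun z hz => by
    rw [← hSΩ]; exact Set.mem_image_of_mem _ hz
  have hSST : S * Sᵀ = 1 := mul_eq_one_comm.mp hSorth
  set A : ℝ → Matrix (Fin n ⊕ Fin n) (Fin n ⊕ Fin n) ℝ :=
    fun s => Jmat n * hessM Γ (γ s) with hAdef
  -- the key symmetry identity
  have key : ∀ s : ℝ, S * A s = -(A (c + c - s) * S) := by
    intro s
    have hγs : γ (c + c - s) = S.mulVec (γ s) := by
      rw [show c + c - s = -s + T / (N : ℝ) by rw [h2c]; ring]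
      exact hsymm s
    have hhess : hessM Γ (S.mulVec (γ s)) = S * hessM Γ (γ s) * Sᵀ := by
      have h := hessM_conj hΩ hΓ S hmemS hSinv (hmem s)
      rw [h]
      simp only [← Matrix.mul_assoc]
      rw [hSST, Matrix.one_mul, Matrix.mul_assoc _ S Sᵀ, hSST, Matrix.mul_one]
    simp only [hAdef, hγs, hhess]
    calc S * (Jmat n * hessM Γ (γ s)) = (S * Jmat n) * hessM Γ (γ s) := by
          rw [Matrix.mul_assoc]
      _ = -(Jmat n * S * hessM Γ (γ s)) := by rw [hSJ, Matrix.neg_mul]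
      _ = -(Jmat n * (S * hessM Γ (γ s) * Sᵀ) * S) := by
          simp only [Matrix.mul_assoc]
          rw [hSorth, Matrix.mul_one]
  -- continuity and bound
  have hγcont : Continuous γ := continuous_iff_continuousAt.mpr fun s => (hsol s).continuousAt
  have hAentry : ∀ i k : Fin n ⊕ Fin n, Continuous fun s => A s i k := by
    intro i k
    have hrw : (fun s => A s i k) = fun s => ∑ l, Jmat n i l * hessM Γ (γ s) l k := by
      funext s; exact Matrix.mul_apply
    rw [hrw]
    refine continuous_finset_sum _ fun l _ => continuous_const.mul ?_
    exact ((hessM_entry_continuousOn hΩ hΓ l k).comp_continuous hγcont hmem)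
  obtain ⟨C, hC⟩ := (isCompact_Icc (a := c) (b := c + c)).exists_bound_of_continuousOn
    (f := fun u (i k : Fin n ⊕ Fin n) => A u i k)
    (continuous_pi fun i => continuous_pi fun k => hAentry i k).continuousOn
  set C0 : ℝ := max C 0 with hC0def
  have hC0 : 0 ≤ C0 := le_max_right _ _
  have hbound : ∀ u ∈ Set.Icc c (c + c), ∀ i k : Fin n ⊕ Fin n, |A u i k| ≤ C0 := by
    intro u hu i k
    have h1 : |A u i k| ≤ ‖fun k' => A u i k'‖ := by
      rw [← Real.norm_eq_abs]; exact norm_le_pi_norm _ k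
    have h2 : ‖fun k' => A u i k'‖ ≤ ‖fun (i' : Fin n ⊕ Fin n) k' => A u i' k'‖ :=
      norm_le_pi_norm (fun i' k' => A u i' k') i
    exact le_trans h1 (le_trans h2 (le_trans (hC u hu) (le_max_left _ _)))
  set proj : ℝ → ℝ := fun t => max 0 (min t c) with hprojdef
  have hproj_mem : ∀ t, c + proj t ∈ Set.Icc c (c + c) := by
    intro t
    have h1 : (0:ℝ) ≤ proj t := le_max_left _ _
    have h2 : proj t ≤ c := max_le hc0.le (min_le_right t c)
    exact ⟨by linarith, by linarith⟩
  have hproj_eq : ∀ t ∈ Set.Ico (0:ℝ) c, proj t = t := by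
    intro t ht
    show max 0 (min t c) = t
    rw [min_eq_left ht.2.le, max_eq_right ht.1]
  set v : ℝ → ((Fin n ⊕ Fin n) → (Fin n ⊕ Fin n) → ℝ) → ((Fin n ⊕ Fin n) → (Fin n ⊕ Fin n) → ℝ) :=
    fun t W i j => ∑ k, A (c + proj t) i k * W k j with hvdef
  set K : ℝ := (Fintype.card (Fin n ⊕ Fin n) : ℝ) * C0 with hKdef
  have hK0 : 0 ≤ K := by positivity
  set K0 : NNReal := Real.toNNReal K with hK0def
  have hlip : ∀ t, LipschitzWith K0 (v t) := by
    intro t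
    apply LipschitzWith.of_dist_le_mul
    intro W1 W2
    have hcoe : (K0 : ℝ) = K := Real.coe_toNNReal _ hK0
    rw [hcoe]
    have hrhs : 0 ≤ K * dist W1 W2 := mul_nonneg hK0 dist_nonneg
    rw [dist_pi_le_iff hrhs]
    intro i
    rw [dist_pi_le_iff hrhs]
    intro j
    rw [Real.dist_eq]
    have hW : ∀ k : Fin n ⊕ Fin n, |W1 k j - W2 k j| ≤ dist W1 W2 := by
      intro k
      calc |W1 k j - W2 k j| = dist (W1 k j) (W2 k j) := (Real.dist_eq _ _).symm
        _ ≤ dist (W1 k) (W2 k) := dist_le_pi_dist _ _ j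
        _ ≤ dist W1 W2 := dist_le_pi_dist _ _ k
    calc |v t W1 i j - v t W2 i j|
        = |∑ k, A (c + proj t) i k * (W1 k j - W2 k j)| := by
          simp only [hvdef, mul_sub, Finset.sum_sub_distrib]
      _ ≤ ∑ k, |A (c + proj t) i k * (W1 k j - W2 k j)| := Finset.abs_sum_le_sum_abs _ _
      _ ≤ ∑ _k : Fin n ⊕ Fin n, C0 * dist W1 W2 := by
          refine Finset.sum_le_sum fun k _ => ?_
          rw [abs_mul]
          exact mul_le_mul (hbound _ (hproj_mem t) i k) (hW k) (abs_nonneg _) hC0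
      _ = K * dist W1 W2 := by
          rw [Finset.sum_const, Finset.card_univ, nsmul_eq_mul, hKdef]
          ring
  -- the two flows
  set B : Matrix (Fin n ⊕ Fin n) (Fin n ⊕ Fin n) ℝ := X c with hBdef
  have hBB : B * B⁻¹ = 1 := Matrix.mul_nonsing_inv _ ((Matrix.isUnit_iff_isUnit_det _).mp hB)
  set D : Matrix (Fin n ⊕ Fin n) (Fin n ⊕ Fin n) ℝ := S * B⁻¹ * Sᵀ * B with hDdef
  set E0 : Matrix (Fin n ⊕ Fin n) (Fin n ⊕ Fin n) ℝ := Sᵀ * D with hE0def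
  set f : ℝ → ((Fin n ⊕ Fin n) → (Fin n ⊕ Fin n) → ℝ) := fun t i j => X (c + t) i j with hfdef
  set g : ℝ → ((Fin n ⊕ Fin n) → (Fin n ⊕ Fin n) → ℝ) :=
    fun t i j => (S * X (c - t) * E0) i j with hgdef
  have hf : ∀ t : ℝ, HasDerivAt f (fun i j => (A (c + t) * X (c + t)) i j) t := by
    intro t
    rw [hasDerivAt_pi]
    intro i
    rw [hasDerivAt_pi]
    intro j
    have h1 : HasDerivAt (fun x : ℝ => c + x) 1 t := (hasDerivAt_id t).const_add c
    have h2 := (hX (c + t) i j).comp t h1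
    rw [mul_one] at h2
    exact h2
  have hmat : ∀ t : ℝ, S * -(A (c - t) * X (c - t)) * E0
      = A (c + t) * (S * X (c - t) * E0) := by
    intro t
    have hk := key (c - t)
    rw [show c + c - (c - t) = c + t by ring] at hk
    rw [Matrix.mul_neg, Matrix.neg_mul, ← Matrix.mul_assoc S, hk]
    simp only [Matrix.neg_mul, neg_neg, Matrix.mul_assoc]
  have hg : ∀ t : ℝ, HasDerivAt g (fun i j => (A (c + t) * (S * X (c - t) * E0)) i j) t := by
    intro t
    rw [hasDerivAt_pi]
    intro i
    rw [hasDerivAt_pi]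
    intro j
    have h1 : HasDerivAt (fun x : ℝ => c - x) (-1) t := (hasDerivAt_id t).const_sub c
    have hXd : ∀ k l : Fin n ⊕ Fin n, HasDerivAt (fun t : ℝ => X (c - t) k l)
        (-((A (c - t) * X (c - t)) k l)) t := by
      intro k l
      have h2 := (hX (c - t) k l).comp t h1
      rw [mul_neg_one] at h2
      exact h2
    have hfun : (fun t : ℝ => g t i j)
        = fun t => ∑ l, (∑ k, S i k * X (c - t) k l) * E0 l j := by
      funext u
      show (S * X (c - u) * E0) i j = _
      simp only [Matrix.mul_apply]
    have hder : HasDerivAt (fun t : ℝ => ∑ l, (∑ k, S i k * X (c - t) k l) * E0 l j)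
        (∑ l, (∑ k, S i k * -((A (c - t) * X (c - t)) k l)) * E0 l j) t := by
      apply HasDerivAt.fun_sum
      intro l _
      apply HasDerivAt.mul_const
      apply HasDerivAt.fun_sum
      intro k _
      exact (hXd k l).const_mul (S i k)
    have hder2 : HasDerivAt (fun t : ℝ => g t i j)
        (∑ l, (∑ k, S i k * -((A (c - t) * X (c - t)) k l)) * E0 l j) t := by
      rw [hfun]; exact hder
    have hval : (∑ l, (∑ k, S i k * -((A (c - t) * X (c - t)) k l)) * E0 l j)
        = (A (c + t) * (S * X (c - t) * E0)) i j := by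
      rw [← hmat t]
      simp only [Matrix.mul_apply, Matrix.neg_apply]
    rw [← hval]
    exact hder2
  -- uniqueness of solutions
  have huniq : Set.EqOn f g (Set.Icc 0 c) := by
    apply ODE_solution_unique hlip
    · exact (continuous_iff_continuousAt.mpr fun t => (hf t).continuousAt).continuousOn
    · intro t ht
      have h := ((hf t).hasDerivWithinAt (s := Set.Ici t))
      have he : v t (f t) = fun i j => (A (c + t) * X (c + t)) i j := by
        funext i j
        show ∑ k, A (c + proj t) i k * X (c + t) k j = (A (c + t) * X (c + t)) i j
        rw [hproj_eq t ht, Matrix.mul_apply]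
      rw [he]
      exact h
    · exact (continuous_iff_continuousAt.mpr fun t => (hg t).continuousAt).continuousOn
    · intro t ht
      have h := ((hg t).hasDerivWithinAt (s := Set.Ici t))
      have he : v t (g t) = fun i j => (A (c + t) * (S * X (c - t) * E0)) i j := by
        funext i j
        show ∑ k, A (c + proj t) i k * (S * X (c - t) * E0) k j
          = (A (c + t) * (S * X (c - t) * E0)) i j
        rw [hproj_eq t ht, Matrix.mul_apply]
      rw [he]
      exact h
    · -- initial condition f 0 = g 0
      have hmat0 : S * B * E0 = B := by
        rw [hE0def, hDdef]
        simp only [← Matrix.mul_assoc]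
        rw [Matrix.mul_assoc (S * B) Sᵀ S, hSorth, Matrix.mul_one,
          Matrix.mul_assoc S B B⁻¹, hBB, Matrix.mul_one, hSST, Matrix.one_mul]
      funext i j
      show X (c + 0) i j = (S * X (c - 0) * E0) i j
      rw [add_zero, sub_zero, ← hBdef, hmat0]
  -- conclude
  have hfg := huniq (Set.right_mem_Icc.mpr hc0.le)
  have hmatc : S * X (c - c) * E0 = D := by
    rw [sub_self, hX0, Matrix.mul_one, hE0def, ← Matrix.mul_assoc, hSST, Matrix.one_mul]
  have hfinal : X (c + c) = D := by
    ext i j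
    have h : f c i j = g c i j := congrFun (congrFun hfg i) j
    show X (c + c) i j = D i j
    rw [← hmatc]
    exact h
  rw [h2c, hfinal, hDdef]
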